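/- arXiv:1511.02334 — 2 statements merged into one kernel-verified Lean document; each statement's English description precedes it below -/
import Mathlib

section
/- For all natural numbers k and m with 4 ≤ m < k, every div point set that has a convexity of k also has a convexity of m; that is, if some sub div point set of X is isomorphic to Conv_k then some sub div point set of X is isomorphic to Conv_m. -/
open Finset

/-- A (unit) dividon: an ordered pair of a divider and a set of divs. -/
abbrev Dividon : Type := Finset ℕ × Finset (Finset ℕ)

/-- A candidate (unit) div point set: a pair of a point set and a set of dividons. -/
abbrev PreDPS : Type := Finset ℕ × Finset Dividon

/-- The union `⋃δ` of a set of divs. -/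
def unionOf (δ : Finset (Finset ℕ)) : Finset ℕ := δ.sup id

/-- `ξ(D) = π₁(D) ∪ ⋃π₂(D)`. -/
def xi (D : Dividon) : Finset ℕ := D.1 ∪ unionOf D.2

/-- `D = (d, δ)` is a dividon over the point set `P`. -/
def IsDividon (P : Finset ℕ) (D : Dividon) : Prop :=
  D.1.card = 2 ∧ D.1 ⊆ P ∧
    ∃ A B : Finset ℕ, A ≠ B ∧ D.2 = {A, B} ∧ A ∪ B = P \ D.1 ∧ A ∩ B = ∅

/-- `X` is a div point set. -/
def IsDPS (X : PreDPS) : Prop :=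
  X.1.Nonempty ∧ X.2.card = Nat.choose X.1.card 2 ∧
    (∀ D ∈ X.2, IsDividon X.1 D) ∧
    ∀ D₁ ∈ X.2, ∀ D₂ ∈ X.2, D₁.1 = D₂.1 → D₁ = D₂

/-- `φ(δ,T) = 1` if the two TBD points of `T` lie in the same div of `δ`,
`φ(δ,T) = 0` otherwise. -/
def phi (δ : Finset (Finset ℕ)) (T : Finset ℕ) : ℕ :=
  if ∃ dv ∈ δ, (T ∩ dv).card = 2 then 1 else 0

/-- `ψ(δ) = 1` if some div of `δ` has two elements, `ψ(δ) = 0` otherwise. -/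
def psi (δ : Finset (Finset ℕ)) : ℕ :=
  if ∃ dv ∈ δ, dv.card = 2 then 1 else 0

/-- Laws (L1), (L2), (L3) for div point sets. -/
def LawsDPS (X : PreDPS) : Prop :=
  (∀ R ⊆ X.1, R.card = 4 →
    ∀ D₁ ∈ X.2, ∀ D₂ ∈ X.2, ∀ D₃ ∈ X.2,
      D₁.1 ∪ D₂.1 ∪ D₃.1 = R → (D₁.1 ∩ D₂.1 ∩ D₃.1).card = 1 →
      (phi D₁.2 (R \ D₁.1) = 0 ↔ phi D₂.2 (R \ D₂.1) = phi D₃.2 (R \ D₃.1))) ∧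
  (∀ R ⊆ X.1, R.card = 4 →
    ∀ D₁ ∈ X.2, ∀ D₂ ∈ X.2, ∀ D₃ ∈ X.2,
      D₁.1 ∪ D₂.1 ∪ D₃.1 = R → (D₁.1 ∩ D₂.1 ∩ D₃.1).card = 1 →
      (phi D₁.2 (R \ D₁.1) = 1 ↔ phi D₂.2 (R \ D₂.1) ≠ phi D₃.2 (R \ D₃.1))) ∧
  (∀ R ⊆ X.1, R.card = 4 →
    ∀ D₁ ∈ X.2, ∀ D₂ ∈ X.2, ∀ D₃ ∈ X.2,
      D₁ ≠ D₂ → D₁ ≠ D₃ → D₂ ≠ D₃ →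
      D₁.1 ∪ D₂.1 ∪ D₃.1 ⊆ R → (D₁.1 ∪ D₂.1 ∪ D₃.1).card = 3 →
      phi D₁.2 (R \ D₁.1) = 0 → phi D₂.2 (R \ D₂.1) = 0 →
      phi D₃.2 (R \ D₃.1) = 1)

/-- The class DPS⁺: div point sets satisfying (L1), (L2), (L3). -/
def DPSplus (X : PreDPS) : Prop := IsDPS X ∧ LawsDPS X

/-- `D = (d, δ)` is a unit dividon over the point set `P`. -/
def IsUnitDividon (P : Finset ℕ) (D : Dividon) : Prop :=
  D.1.card = 2 ∧ D.1 ⊆ P ∧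
    ∃ A B : Finset ℕ, A ≠ B ∧ D.2 = {A, B} ∧ (A ∪ B).card = 2 ∧
      A ∪ B ⊆ P \ D.1 ∧ A ∩ B = ∅

/-- `U` is a unit div point set. -/
def IsUDPS (U : PreDPS) : Prop :=
  U.1.Nonempty ∧
    U.2.card = Nat.choose U.1.card 2 * Nat.choose (U.1.card - 2) 2 ∧
    (∀ D ∈ U.2, IsUnitDividon U.1 D) ∧
    ∀ D₁ ∈ U.2, ∀ D₂ ∈ U.2,
      D₁.1 = D₂.1 → unionOf D₁.2 = unionOf D₂.2 → D₁ = D₂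

/-- Laws (U1), (U2), (U3) for unit div point sets. -/
def LawsUDPS (U : PreDPS) : Prop :=
  (∀ R ⊆ U.1, R.card = 4 →
    ∀ D₁ ∈ U.2, ∀ D₂ ∈ U.2, ∀ D₃ ∈ U.2,
      D₁ ≠ D₂ → D₁ ≠ D₃ → D₂ ≠ D₃ →
      xi D₁ = R → xi D₂ = R → xi D₃ = R →
      (D₁.1 ∩ D₂.1 ∩ D₃.1).card = 1 →
      (psi D₁.2 = 0 ↔ psi D₂.2 = psi D₃.2)) ∧
  (∀ R ⊆ U.1, R.card = 4 →
    ∀ D₁ ∈ U.2, ∀ D₂ ∈ U.2, ∀ D₃ ∈ U.2,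
      D₁ ≠ D₂ → D₁ ≠ D₃ → D₂ ≠ D₃ →
      xi D₁ = R → xi D₂ = R → xi D₃ = R →
      (D₁.1 ∩ D₂.1 ∩ D₃.1).card = 1 →
      (psi D₁.2 = 1 ↔ psi D₂.2 ≠ psi D₃.2)) ∧
  (∀ R ⊆ U.1, R.card = 4 →
    ∀ D₁ ∈ U.2, ∀ D₂ ∈ U.2, ∀ D₃ ∈ U.2,
      D₁ ≠ D₂ → D₁ ≠ D₃ → D₂ ≠ D₃ →
      xi D₁ = R → xi D₂ = R → xi D₃ = R →
      (D₁.1 ∪ D₂.1 ∪ D₃.1).card = 3 →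
      psi D₁.2 = 0 → psi D₂.2 = 0 → psi D₃.2 = 1)

/-- The class UDPS⁺: unit div point sets satisfying (U1), (U2), (U3). -/
def UDPSplus (U : PreDPS) : Prop := IsUDPS U ∧ LawsUDPS U

/-- `F_udps`: breaks every dividon of a div point set into unit dividons,
one for each 2-element subset `T = {a,b}` of the TBD points: the unit dividon is
`(d, {{a,b},∅})` if `a` and `b` lie in the same div, and `(d, {{a},{b}})` otherwise. -/
def Fudps (X : PreDPS) : PreDPS :=
  (X.1, X.2.biUnion fun D =>
    ((X.1 \ D.1).powersetCard 2).image fun T =>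
      (D.1, if ∃ dv ∈ D.2, T ⊆ dv then ({T, ∅} : Finset (Finset ℕ))
            else T.image fun a => ({a} : Finset ℕ)))

/-- `Y` is the sub div point set of `X` on the point set `Ps` (where `4 ≤ |Ps|`):
the unique div point set with point set `Ps` whose image under `F_udps` has exactly
the unit dividons `D` of `F_udps X` with `ξ(D) ⊆ Ps`. -/
def IsSdps (X : PreDPS) (Ps : Finset ℕ) (Y : PreDPS) : Prop :=
  Ps ⊆ X.1 ∧ 4 ≤ Ps.card ∧ IsDPS Y ∧ Y.1 = Ps ∧
    (Fudps Y).2 = (Fudps X).2.filter fun D => xi D ⊆ Ps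

/-- Isomorphism of (candidate) div point sets. -/
def Isom (X Y : PreDPS) : Prop :=
  ∃ f : ℕ → ℕ, Set.BijOn f ↑X.1 ↑Y.1 ∧
    ∀ D ∈ X.2, (D.1.image f, D.2.image (Finset.image f)) ∈ Y.2

/-- Isomorphism of sets of (unit) dividons. -/
def OmegaIsom (Ω₁ Ω₂ : Finset Dividon) : Prop :=
  Ω₁.card = Ω₂.card ∧
    ∃ f : ℕ → ℕ, Set.BijOn f ↑(Ω₁.sup xi) ↑(Ω₂.sup xi) ∧
      ∀ D ∈ Ω₁, (D.1.image f, D.2.image (Finset.image f)) ∈ Ω₂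

/-- The div point set Conc₄¹. -/
def Conc41 : PreDPS :=
  ({1, 2, 3, 4},
   {({1, 2}, {{3}, {4}}), ({1, 3}, {{2}, {4}}), ({1, 4}, {{2}, {3}}),
    ({2, 3}, {{1, 4}, ∅}), ({2, 4}, {{1, 3}, ∅}), ({3, 4}, {{1, 2}, ∅})})

/-- The div point set Conv₄. -/
def Conv4 : PreDPS :=
  ({1, 2, 3, 4},
   {({1, 2}, {{3, 4}, ∅}), ({1, 3}, {{2}, {4}}), ({1, 4}, {{2, 3}, ∅}),
    ({2, 3}, {{1, 4}, ∅}), ({2, 4}, {{1}, {3}}), ({3, 4}, {{1, 2}, ∅})})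

/-- The div point set Conv_n on `{1, …, n}`: the dividon with divider `d = {i,j}`,
`i < j`, has divs `{p : i < p < j}` and `{p : p < i or p > j}`. -/
def ConvN (n : ℕ) : PreDPS :=
  (Finset.Icc 1 n,
   ((Finset.Icc 1 n).powersetCard 2).image fun d =>
     (d, ({(Finset.Icc 1 n).filter fun p => (∃ i ∈ d, i < p) ∧ ∃ j ∈ d, p < j,
           (Finset.Icc 1 n).filter fun p =>
             (∀ i ∈ d, p < i) ∨ ∀ i ∈ d, i < p} : Finset (Finset ℕ))))

/-! ### Auxiliary machinery -/

/-- Restriction of a dividon to a smaller point set. -/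
def restrictD (Ps : Finset ℕ) (D : Dividon) : Dividon := (D.1, D.2.image (· ∩ Ps))

/-- Restriction of a div point set to a smaller point set. -/
def restrictDPS (Y : PreDPS) (Ps : Finset ℕ) : PreDPS :=
  (Ps, (Y.2.filter (fun D => D.1 ⊆ Ps)).image (restrictD Ps))

lemma unionOf_pair (T : Finset ℕ) : unionOf {T, ∅} = T := by
  simp [unionOf]

lemma unionOf_singletons (T : Finset ℕ) :
    unionOf (T.image fun a => ({a} : Finset ℕ)) = T := by
  ext x; simp [unionOf, Finset.mem_sup]

lemma xi_unit (d T : Finset ℕ) (c : Prop) [Decidable c] :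
    xi (d, if c then ({T, ∅} : Finset (Finset ℕ)) else T.image fun a => {a}) = d ∪ T := by
  by_cases h : c <;> simp [xi, h, unionOf_pair, unionOf_singletons]

lemma mem_Fudps {X : PreDPS} {u : Dividon} :
    u ∈ (Fudps X).2 ↔ ∃ D ∈ X.2, ∃ T, T ⊆ X.1 \ D.1 ∧ T.card = 2 ∧
      u = (D.1, if ∃ dv ∈ D.2, T ⊆ dv then ({T, ∅} : Finset (Finset ℕ))
                else T.image fun a => {a}) := by
  simp only [Fudps, Finset.mem_biUnion, Finset.mem_image, Finset.mem_powersetCard]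
  constructor
  · rintro ⟨D, hD, T, ⟨hT1, hT2⟩, rfl⟩; exact ⟨D, hD, T, hT1, hT2, rfl⟩
  · rintro ⟨D, hD, T, hT1, hT2, rfl⟩; exact ⟨D, hD, T, ⟨hT1, hT2⟩, rfl⟩

lemma Fudps_restrict {Y : PreDPS} {Ps : Finset ℕ} (hPs : Ps ⊆ Y.1) :
    (Fudps (restrictDPS Y Ps)).2 = (Fudps Y).2.filter (fun u => xi u ⊆ Ps) := by
  ext u
  rw [Finset.mem_filter, mem_Fudps, mem_Fudps]
  constructor
  · rintro ⟨D', hD', T, hT1, hT2, rfl⟩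
    simp only [restrictDPS, Finset.mem_image, Finset.mem_filter] at hD'
    obtain ⟨D, ⟨hD, hdPs⟩, rfl⟩ := hD'
    have hTPs : T ⊆ Ps := hT1.trans Finset.sdiff_subset
    have hT1' : T ⊆ Y.1 \ D.1 := by
      intro x hx
      have := hT1 hx
      rw [Finset.mem_sdiff] at this ⊢
      exact ⟨hPs this.1, this.2⟩
    have hcond : (∃ dv ∈ (restrictD Ps D).2, T ⊆ dv) ↔ ∃ dv ∈ D.2, T ⊆ dv := by
      simp only [restrictD, Finset.mem_image]
      constructor
      · rintro ⟨_, ⟨dv, hdv, rfl⟩, hsub⟩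
        exact ⟨dv, hdv, hsub.trans Finset.inter_subset_left⟩
      · rintro ⟨dv, hdv, hsub⟩
        exact ⟨dv ∩ Ps, ⟨dv, hdv, rfl⟩, Finset.subset_inter hsub hTPs⟩
    have hif : (if ∃ dv ∈ (restrictD Ps D).2, T ⊆ dv then ({T, ∅} : Finset (Finset ℕ))
        else T.image fun a => {a})
        = (if ∃ dv ∈ D.2, T ⊆ dv then ({T, ∅} : Finset (Finset ℕ))
        else T.image fun a => {a}) := if_congr hcond rfl rfl
    refine ⟨⟨D, hD, T, hT1', hT2, ?_⟩, ?_⟩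
    · rw [show (restrictD Ps D).1 = D.1 from rfl, hif]
    · rw [show (restrictD Ps D).1 = D.1 from rfl, hif, xi_unit]
      exact Finset.union_subset hdPs hTPs
  · rintro ⟨⟨D, hD, T, hT1, hT2, rfl⟩, hxi⟩
    rw [xi_unit] at hxi
    have hdPs : D.1 ⊆ Ps := (Finset.union_subset_iff.mp hxi).1
    have hTPs : T ⊆ Ps := (Finset.union_subset_iff.mp hxi).2
    have hT1' : T ⊆ Ps \ D.1 := by
      intro x hx
      rw [Finset.mem_sdiff]
      exact ⟨hTPs hx, (Finset.mem_sdiff.mp (hT1 hx)).2⟩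
    have hcond : (∃ dv ∈ (restrictD Ps D).2, T ⊆ dv) ↔ ∃ dv ∈ D.2, T ⊆ dv := by
      simp only [restrictD, Finset.mem_image]
      constructor
      · rintro ⟨_, ⟨dv, hdv, rfl⟩, hsub⟩
        exact ⟨dv, hdv, hsub.trans Finset.inter_subset_left⟩
      · rintro ⟨dv, hdv, hsub⟩
        exact ⟨dv ∩ Ps, ⟨dv, hdv, rfl⟩, Finset.subset_inter hsub hTPs⟩
    refine ⟨restrictD Ps D, ?_, T, hT1', hT2, ?_⟩
    · simp only [restrictDPS, Finset.mem_image, Finset.mem_filter]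
      exact ⟨D, ⟨hD, hdPs⟩, rfl⟩
    · rw [show (restrictD Ps D).1 = D.1 from rfl, if_congr hcond rfl rfl]

lemma divider_surj {Y : PreDPS} (hY : IsDPS Y) {d : Finset ℕ} (hd : d ⊆ Y.1)
    (hcard : d.card = 2) : ∃ D ∈ Y.2, D.1 = d := by
  have himg : Y.2.image (·.1) = Y.1.powersetCard 2 := by
    apply Finset.eq_of_subset_of_card_le
    · intro x hx
      simp only [Finset.mem_image] at hx
      obtain ⟨D, hD, rfl⟩ := hx
      obtain ⟨h1, h2, _⟩ := hY.2.2.1 D hD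
      exact Finset.mem_powersetCard.mpr ⟨h2, h1⟩
    · rw [Finset.card_powersetCard, Finset.card_image_of_injOn, hY.2.1]
      intro D₁ h₁ D₂ h₂ he
      exact hY.2.2.2 D₁ h₁ D₂ h₂ he
  have : d ∈ Y.2.image (·.1) := himg ▸ Finset.mem_powersetCard.mpr ⟨hd, hcard⟩
  simpa using this

lemma IsDPS_restrict {Y : PreDPS} {Ps : Finset ℕ} (hY : IsDPS Y) (hPs : Ps ⊆ Y.1)
    (h4 : 4 ≤ Ps.card) : IsDPS (restrictDPS Y Ps) := by
  have hne : Ps.Nonempty := Finset.card_pos.mp (by omega)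
  have hinj : Set.InjOn (restrictD Ps) ↑(Y.2.filter (fun D => D.1 ⊆ Ps)) := by
    intro D₁ h₁ D₂ h₂ he
    rw [Finset.mem_coe, Finset.mem_filter] at h₁ h₂
    have h' : (restrictD Ps D₁).1 = (restrictD Ps D₂).1 := congrArg Prod.fst he
    exact hY.2.2.2 D₁ h₁.1 D₂ h₂.1 h'
  refine ⟨hne, ?_, ?_, ?_⟩
  · show ((Y.2.filter (fun D => D.1 ⊆ Ps)).image (restrictD Ps)).card = Nat.choose Ps.card 2
    rw [Finset.card_image_of_injOn hinj, ← Finset.card_powersetCard 2 Ps]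
    apply Finset.card_bij (fun D _ => D.1)
    · intro D hD
      rw [Finset.mem_filter] at hD
      exact Finset.mem_powersetCard.mpr ⟨hD.2, (hY.2.2.1 D hD.1).1⟩
    · intro D₁ h₁ D₂ h₂ he
      rw [Finset.mem_filter] at h₁ h₂
      exact hY.2.2.2 D₁ h₁.1 D₂ h₂.1 he
    · intro d hd
      rw [Finset.mem_powersetCard] at hd
      obtain ⟨D, hD, rfl⟩ := divider_surj hY (hd.1.trans hPs) hd.2
      exact ⟨D, Finset.mem_filter.mpr ⟨hD, hd.1⟩, rfl⟩
  · intro D' hD'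
    simp only [restrictDPS, Finset.mem_image, Finset.mem_filter] at hD'
    obtain ⟨D, ⟨hD, hdPs⟩, rfl⟩ := hD'
    obtain ⟨hc, hs, A, B, hAB, hδ, hu, hi⟩ := hY.2.2.1 D hD
    have hdisj : (A ∩ Ps) ∩ (B ∩ Ps) = ∅ := by
      apply Finset.subset_empty.mp
      rw [← hi]
      intro x hx
      simp only [Finset.mem_inter] at hx ⊢
      exact ⟨hx.1.1, hx.2.1⟩
    have hun : (A ∩ Ps) ∪ (B ∩ Ps) = Ps \ D.1 := by
      rw [← Finset.union_inter_distrib_right, hu]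
      ext x
      simp only [Finset.mem_inter, Finset.mem_sdiff]
      constructor
      · rintro ⟨⟨_, h2⟩, h3⟩; exact ⟨h3, h2⟩
      · rintro ⟨h1, h2⟩; exact ⟨⟨hPs h1, h2⟩, h1⟩
    have hnemp : (Ps \ D.1).Nonempty := by
      rw [← Finset.card_pos]
      have := Finset.le_card_sdiff D.1 Ps
      omega
    refine ⟨hc, hdPs, A ∩ Ps, B ∩ Ps, ?_, ?_, hun, hdisj⟩
    · intro he
      rw [he, Finset.inter_self] at hdisj
      rw [he, Finset.union_self, hdisj] at hun
      exact hnemp.ne_empty hun.symm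
    · show Finset.image _ D.2 = _
      rw [hδ]
      simp [Finset.image_insert]
  · intro D₁' h₁' D₂' h₂' he
    simp only [restrictDPS, Finset.mem_image] at h₁' h₂'
    obtain ⟨D₁, h₁, rfl⟩ := h₁'
    obtain ⟨D₂, h₂, rfl⟩ := h₂'
    rw [Finset.mem_filter] at h₁ h₂
    rw [hY.2.2.2 D₁ h₁.1 D₂ h₂.1 he]

lemma IsSdps_restrict {X Y : PreDPS} {Ps Ps' : Finset ℕ}
    (hS : IsSdps X Ps Y) (hsub : Ps' ⊆ Ps) (h4 : 4 ≤ Ps'.card) :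
    IsSdps X Ps' (restrictDPS Y Ps') := by
  obtain ⟨hPsX, hm, hYdps, hY1, hF⟩ := hS
  have hPs'Y : Ps' ⊆ Y.1 := hY1 ▸ hsub
  refine ⟨hsub.trans hPsX, h4, IsDPS_restrict hYdps hPs'Y h4, rfl, ?_⟩
  rw [Fudps_restrict hPs'Y, hF, Finset.filter_filter]
  exact Finset.filter_congr fun u _ => ⟨fun h => h.2, fun h => ⟨h.trans hsub, h⟩⟩

lemma filter_Icc_inter {m k : ℕ} (hmk : m ≤ k) (p : ℕ → Prop) [DecidablePred p] :
    ((Finset.Icc 1 k).filter p) ∩ Finset.Icc 1 m = (Finset.Icc 1 m).filter p := by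
  ext x
  simp only [Finset.mem_inter, Finset.mem_filter, Finset.mem_Icc]
  constructor
  · rintro ⟨⟨_, hp⟩, h1, h2⟩; exact ⟨⟨h1, h2⟩, hp⟩
  · rintro ⟨⟨h1, h2⟩, hp⟩; exact ⟨⟨⟨h1, h2.trans hmk⟩, hp⟩, h1, h2⟩

lemma image_inter_filter {f : ℕ → ℕ} {m : ℕ} {Ps v : Finset ℕ} (hv : v ⊆ Ps) :
    (v ∩ Ps.filter (fun x => f x ∈ Finset.Icc 1 m)).image f
      = v.image f ∩ Finset.Icc 1 m := by
  ext y
  simp only [Finset.mem_image, Finset.mem_inter, Finset.mem_filter]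
  constructor
  · rintro ⟨x, ⟨hxv, _, hfx⟩, rfl⟩; exact ⟨⟨x, hxv, rfl⟩, hfx⟩
  · rintro ⟨⟨x, hxv, rfl⟩, hy⟩; exact ⟨x, ⟨hxv, hv hxv, hy⟩, rfl⟩
/-- For `4 ≤ m < k`, every div point set with a convexity of `k` (some sub div point
set isomorphic to Conv_k) also has a convexity of `m`. -/
theorem stmt_11 (k m : ℕ) (h4 : 4 ≤ m) (hmk : m < k) (X : PreDPS) (hX : IsDPS X)
    (h : ∃ Ps Y, IsSdps X Ps Y ∧ Isom Y (ConvN k)) :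
    ∃ Ps Y, IsSdps X Ps Y ∧ Isom Y (ConvN m) := by
  obtain ⟨Ps, Y, hS, f, hbij, hmap⟩ := h
  have hY1 : Y.1 = Ps := hS.2.2.2.1
  have hYdps : IsDPS Y := hS.2.2.1
  rw [hY1] at hbij
  have hbijk : Set.BijOn f ↑Ps ↑(Finset.Icc 1 k) := hbij
  set Ps' := Ps.filter (fun x => f x ∈ Finset.Icc 1 m) with hPs'def
  have hsub : Ps' ⊆ Ps := Finset.filter_subset _ _
  have hmaps' : ∀ x ∈ Ps', f x ∈ Finset.Icc 1 m := fun x hx => (Finset.mem_filter.mp hx).2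
  have hsurj' : ∀ y ∈ Finset.Icc 1 m, ∃ x ∈ Ps', f x = y := by
    intro y hy
    have hyk : y ∈ Finset.Icc 1 k := by
      rw [Finset.mem_Icc] at hy ⊢; omega
    obtain ⟨x, hx, hfx⟩ := hbijk.surjOn hyk
    exact ⟨x, Finset.mem_filter.mpr ⟨hx, hfx ▸ hy⟩, hfx⟩
  have hinj' : ∀ x₁ ∈ Ps, ∀ x₂ ∈ Ps, f x₁ = f x₂ → x₁ = x₂ := fun a ha b hb =>
    hbijk.injOn ha hb
  have hcard' : Ps'.card = m := by
    rw [show m = (Finset.Icc 1 m).card by simp]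
    apply Finset.card_bij (fun x _ => f x) hmaps'
    · intro a ha b hb hab; exact hinj' a (hsub ha) b (hsub hb) hab
    · intro y hy
      obtain ⟨x, hx, hfx⟩ := hsurj' y hy
      exact ⟨x, hx, hfx⟩
  refine ⟨Ps', restrictDPS Y Ps', IsSdps_restrict hS hsub (by omega), f, ?_, ?_⟩
  · refine ⟨fun x hx => hmaps' x hx, fun a ha b hb => hinj' a (hsub ha) b (hsub hb), ?_⟩
    intro y hy
    obtain ⟨x, hx, hfx⟩ := hsurj' y hy
    exact ⟨x, hx, hfx⟩
  · intro D' hD'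
    simp only [restrictDPS, Finset.mem_image, Finset.mem_filter] at hD'
    obtain ⟨D, ⟨hD, hdPs'⟩, rfl⟩ := hD'
    have hmem := hmap D hD
    simp only [ConvN, Finset.mem_image, Finset.mem_powersetCard] at hmem
    obtain ⟨d₀, ⟨hd₀sub, hd₀card⟩, heq⟩ := hmem
    rw [Prod.mk.injEq] at heq
    obtain ⟨hd1, hd2⟩ := heq
    have hdivPs : ∀ v ∈ D.2, v ⊆ Ps := by
      obtain ⟨_, _, A, B, _, hδ, hu, _⟩ := hYdps.2.2.1 D hD
      intro v hv
      rw [hδ] at hv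
      have hAB : A ∪ B ⊆ Ps := by rw [hu, hY1]; exact Finset.sdiff_subset
      simp only [Finset.mem_insert, Finset.mem_singleton] at hv
      rcases hv with rfl | rfl
      · exact Finset.subset_union_left.trans hAB
      · exact Finset.subset_union_right.trans hAB
    simp only [ConvN, Finset.mem_image, Finset.mem_powersetCard]
    refine ⟨d₀, ⟨?_, hd₀card⟩, ?_⟩
    · rw [hd1]
      intro y hy
      obtain ⟨x, hx, rfl⟩ := Finset.mem_image.mp hy
      exact hmaps' x (hdPs' hx)
    · have hchain : ((restrictD Ps' D).2).image (Finset.image f)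
          = (D.2.image (Finset.image f)).image (· ∩ Finset.Icc 1 m) := by
        show (D.2.image (· ∩ Ps')).image (Finset.image f) = _
        rw [Finset.image_image, Finset.image_image]
        apply Finset.image_congr
        intro v hv
        simp only [Function.comp_apply]
        rw [hPs'def]
        exact image_inter_filter (hdivPs v hv)
      have hsnd : ((restrictD Ps' D).2).image (Finset.image f)
          = {(Finset.Icc 1 m).filter fun p => (∃ i ∈ d₀, i < p) ∧ ∃ j ∈ d₀, p < j,
             (Finset.Icc 1 m).filter fun p => (∀ i ∈ d₀, p < i) ∨ ∀ i ∈ d₀, i < p} := by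
        rw [hchain, ← hd2]
        simp only [Finset.image_insert, Finset.image_singleton]
        rw [filter_Icc_inter hmk.le, filter_Icc_inter hmk.le]
      simp only [Prod.mk.injEq]
      exact ⟨hd1, hsnd.symm⟩
end

section
/- If a unit div point set (P,Ω) is in the class UDPS⁺ and P' is a subset of P with |P'| ≥ 4, then the pair (P', {D ∈ Ω : ξ(D) ⊆ P'}) is a unit div point set and is also in UDPS⁺. -/
open Finset

lemma unionOf_pair' (A B : Finset ℕ) : unionOf {A, B} = A ∪ B := by
  simp [unionOf]

def Tset' (Q : Finset ℕ) : Finset (Σ _ : Finset ℕ, Finset ℕ) :=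
  (Q.powersetCard 2).sigma fun d => (Q \ d).powersetCard 2

lemma card_Tset' (Q : Finset ℕ) :
    (Tset' Q).card = Nat.choose Q.card 2 * Nat.choose (Q.card - 2) 2 := by
  rw [Tset', Finset.card_sigma]
  rw [Finset.sum_congr rfl (fun d hd => ?_), Finset.sum_const, card_powersetCard, smul_eq_mul]
  rw [card_powersetCard]
  congr 1
  rw [mem_powersetCard] at hd
  rw [card_sdiff_of_subset hd.1, hd.2]

/-- If a unit div point set `(P,Ω)` is in UDPS⁺ and `P' ⊆ P` with `|P'| ≥ 4`, then
`(P', {D ∈ Ω : ξ(D) ⊆ P'})` is a unit div point set in UDPS⁺. -/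
theorem stmt_15 (U : PreDPS) (hU : IsUDPS U) (hplus : LawsUDPS U)
    (P' : Finset ℕ) (hsub : P' ⊆ U.1) (h4 : 4 ≤ P'.card) :
    IsUDPS (P', U.2.filter fun D => xi D ⊆ P') ∧
    LawsUDPS (P', U.2.filter fun D => xi D ⊆ P') := by
  obtain ⟨hne, hcard, hdiv, huniq⟩ := hU
  set g : Dividon → (Σ _ : Finset ℕ, Finset ℕ) := fun D => ⟨D.1, unionOf D.2⟩ with hg
  -- basic facts about each dividon
  have key : ∀ D ∈ U.2, D.1.card = 2 ∧ D.1 ⊆ U.1 ∧ (unionOf D.2).card = 2 ∧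
      unionOf D.2 ⊆ U.1 \ D.1 := by
    intro D hD
    obtain ⟨h2, hsubP, A, B, hAB, hδ, hcAB, hsAB, hint⟩ := hdiv D hD
    have hu : unionOf D.2 = A ∪ B := by rw [hδ]; exact unionOf_pair' A B
    exact ⟨h2, hsubP, by rw [hu]; exact hcAB, by rw [hu]; exact hsAB⟩
  have hgmem : ∀ D ∈ U.2, g D ∈ Tset' U.1 := by
    intro D hD
    obtain ⟨h2, hsubP, hc, hs⟩ := key D hD
    simp only [hg, Tset', mem_sigma, mem_powersetCard]
    exact ⟨⟨hsubP, h2⟩, hs, hc⟩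
  have hinj : Set.InjOn g ↑U.2 := by
    intro D₁ h₁ D₂ h₂ heq
    simp only [hg, Sigma.mk.inj_iff, heq_eq_eq] at heq
    exact huniq D₁ h₁ D₂ h₂ heq.1 heq.2
  -- the image of g is all of Tset' U.1
  have himg : U.2.image g = Tset' U.1 := by
    apply Finset.eq_of_subset_of_card_le
    · intro t ht
      obtain ⟨D, hD, rfl⟩ := Finset.mem_image.mp ht
      exact hgmem D hD
    · rw [card_Tset', Finset.card_image_of_injOn hinj, hcard]
  -- characterize membership in the filter via g
  have hchar : ∀ D ∈ U.2, (xi D ⊆ P' ↔ g D ∈ Tset' P') := by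
    intro D hD
    obtain ⟨h2, hsubP, hc, hs⟩ := key D hD
    simp only [hg, Tset', mem_sigma, mem_powersetCard, xi]
    constructor
    · intro h
      have hd1 : D.1 ⊆ P' := (Finset.union_subset_iff.mp h).1
      have hu1 : unionOf D.2 ⊆ P' := (Finset.union_subset_iff.mp h).2
      refine ⟨⟨hd1, h2⟩, ?_, hc⟩
      intro x hx
      exact Finset.mem_sdiff.mpr ⟨hu1 hx, (Finset.mem_sdiff.mp (hs hx)).2⟩
    · rintro ⟨⟨hd1, -⟩, hu1, -⟩
      exact Finset.union_subset hd1 (hu1.trans Finset.sdiff_subset)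
  have hTsub : Tset' P' ⊆ Tset' U.1 := by
    intro t ht
    simp only [Tset', mem_sigma, mem_powersetCard] at ht ⊢
    exact ⟨⟨ht.1.1.trans hsub, ht.1.2⟩, ht.2.1.trans (Finset.sdiff_subset_sdiff hsub le_rfl),
      ht.2.2⟩
  -- image of the filter is Tset' P'
  have himg2 : (U.2.filter fun D => xi D ⊆ P').image g = Tset' P' := by
    apply Finset.Subset.antisymm
    · intro t ht
      obtain ⟨D, hD, rfl⟩ := Finset.mem_image.mp ht
      rw [Finset.mem_filter] at hD
      exact (hchar D hD.1).mp hD.2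
    · intro t ht
      have := himg ▸ (hTsub ht)
      obtain ⟨D, hD, rfl⟩ := Finset.mem_image.mp this
      exact Finset.mem_image.mpr ⟨D, Finset.mem_filter.mpr ⟨hD, (hchar D hD).mpr ht⟩, rfl⟩
  have hcardfilter : (U.2.filter fun D => xi D ⊆ P').card =
      Nat.choose P'.card 2 * Nat.choose (P'.card - 2) 2 := by
    rw [← card_Tset', ← himg2,
      Finset.card_image_of_injOn (hinj.mono (by simp only [Finset.coe_filter]; exact fun x hx => hx.1))]
  refine ⟨⟨?_, hcardfilter, ?_, ?_⟩, ?_, ?_, ?_⟩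
  · have : 0 < P'.card := by omega
    exact Finset.card_pos.mp this
  · intro D hD
    rw [Finset.mem_filter] at hD
    obtain ⟨h2, hsubP, A, B, hAB, hδ, hcAB, hsAB, hint⟩ := hdiv D hD.1
    have hxi := hD.2
    rw [xi] at hxi
    have hd1 : D.1 ⊆ P' := (Finset.union_subset_iff.mp hxi).1
    have hu1 : unionOf D.2 ⊆ P' := (Finset.union_subset_iff.mp hxi).2
    have hu : unionOf D.2 = A ∪ B := by rw [hδ]; exact unionOf_pair' A B
    refine ⟨h2, hd1, A, B, hAB, hδ, hcAB, ?_, hint⟩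
    intro x hx
    exact Finset.mem_sdiff.mpr ⟨hu1 (hu ▸ hx), (Finset.mem_sdiff.mp (hsAB hx)).2⟩
  · intro D₁ h₁ D₂ h₂ he1 he2
    rw [Finset.mem_filter] at h₁ h₂
    exact huniq D₁ h₁.1 D₂ h₂.1 he1 he2
  · intro R hR hR4 D₁ h₁ D₂ h₂ D₃ h₃
    rw [Finset.mem_filter] at h₁ h₂ h₃
    exact hplus.1 R (hR.trans hsub) hR4 D₁ h₁.1 D₂ h₂.1 D₃ h₃.1
  · intro R hR hR4 D₁ h₁ D₂ h₂ D₃ h₃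
    rw [Finset.mem_filter] at h₁ h₂ h₃
    exact hplus.2.1 R (hR.trans hsub) hR4 D₁ h₁.1 D₂ h₂.1 D₃ h₃.1
  · intro R hR hR4 D₁ h₁ D₂ h₂ D₃ h₃
    rw [Finset.mem_filter] at h₁ h₂ h₃
    exact hplus.2.2 R (hR.trans hsub) hR4 D₁ h₁.1 D₂ h₂.1 D₃ h₃.1
end
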